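/- Let V be a vector space over an algebraically closed field k of characteristic p > 0, let q be a power of p, and let a = ∑_{j=0}^m a_j t^j ∈ ℤ_{≥0}[t]. Suppose the multiplication map mult: ⨂_{j=0}^m Sym^{a_j}(V*)^{[j]} → Sym^{a(q)}(V*) (sending a tensor of forms f_0 ⊗ f_1 ⊗ ... ⊗ f_m to ∏_j f_j^{q^j}) fails to be injective for some finite-dimensional V. Then it already fails to be injective for some V of dimension 2. -/

import Mathlib

/-- The multiplication map `mult : ⨂_j Sym^{a_j}(V^*)^{[j]} → Sym^{a(q)}(V^*)` for
`V = k^n`, written in the monomial basis of the source: the source is the free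
`k`-module on tuples `d = (d_0, …, d_m)` of exponent vectors with `|d_j| = a_j`
(the monomial basis of `⨂_j Sym^{a_j}(V^*)^{[j]}`), and the basis element indexed by
`d` is sent to the product `∏_j (x^{d_j})^{q^j}`, i.e. the monomial with exponent
vector `∑_j q^j · d_j`. -/
noncomputable def multMap (k : Type*) [CommSemiring k] (q n m : ℕ)
    (a : Fin (m + 1) → ℕ) :
    ({d : Fin (m + 1) → (Fin n →₀ ℕ) // ∀ j, ((d j).sum fun _ e => e) = a j} →₀ k)
      →ₗ[k] MvPolynomial (Fin n) k :=
  Finsupp.lsum k (fun d => LinearMap.toSpanSingleton k _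
    (MvPolynomial.monomial (∑ j : Fin (m + 1), q ^ (j : ℕ) • (d.1 j)) (1 : k)))


noncomputable def Emap (q n m : ℕ) (a : Fin (m + 1) → ℕ)
    (d : {d : Fin (m + 1) → (Fin n →₀ ℕ) // ∀ j, ((d j).sum fun _ e => e) = a j}) :
    Fin n →₀ ℕ := ∑ j : Fin (m + 1), q ^ (j : ℕ) • d.1 j

lemma multMap_single (k : Type*) [CommSemiring k] (q n m : ℕ) (a : Fin (m+1) → ℕ) (d) (c : k) :
    multMap k q n m a (Finsupp.single d c) = MvPolynomial.monomial (Emap q n m a d) c := by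
  simp [multMap, Emap, MvPolynomial.smul_monomial]

lemma multMap_eq_mapDomain (k : Type*) [CommSemiring k] (q n m : ℕ) (a : Fin (m+1) → ℕ) (x) :
    multMap k q n m a x = AddMonoidAlgebra.ofCoeff (Finsupp.mapDomain (Emap q n m a) x) := by
  induction x using Finsupp.induction_linear with
  | zero => simp
  | add f g hf hg => rw [map_add, hf, hg, Finsupp.mapDomain_add, AddMonoidAlgebra.ofCoeff_add]
  | single d c =>
      rw [multMap_single, Finsupp.mapDomain_single, AddMonoidAlgebra.ofCoeff_single, MvPolynomial.single_eq_monomial]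

lemma mult_inj_iff (k : Type*) [CommSemiring k] [Nontrivial k] (q n m : ℕ) (a : Fin (m+1) → ℕ) :
    Function.Injective (multMap k q n m a) ↔ Function.Injective (Emap q n m a) := by
  constructor
  · intro h d d' hdd'
    have : multMap k q n m a (Finsupp.single d 1) = multMap k q n m a (Finsupp.single d' 1) := by
      rw [multMap_single, multMap_single, hdd']
    have := h this
    rcases (Finsupp.single_eq_single_iff _ _ _ _).mp this with ⟨h1, _⟩ | ⟨h1, _⟩
    · exact h1
    · exact absurd h1 one_ne_zero
  · intro h x y hxy
    rw [multMap_eq_mapDomain, multMap_eq_mapDomain] at hxy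
    exact Finsupp.mapDomain_injective h (AddMonoidAlgebra.ofCoeff_injective hxy)

lemma mapDomain_collapse (n : ℕ) (i : Fin n) (g : Fin n →₀ ℕ) :
    Finsupp.mapDomain (fun x => if x = i then (0 : Fin 2) else 1) g 0 = g i := by
  classical
  rw [Finsupp.mapDomain, Finsupp.sum_apply, Finsupp.sum]
  simp only [Finsupp.single_apply]
  have : ∀ a ∈ g.support,
      (if (if a = i then (0 : Fin 2) else 1) = 0 then g a else 0)
        = if a = i then g a else 0 := by
    intro a _; by_cases h : a = i <;> simp [h]
  rw [Finset.sum_congr rfl this, Finset.sum_ite_eq' g.support i g]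
  by_cases h : i ∈ g.support
  · simp [h]
  · simp [h, Finsupp.notMem_support_iff.mp h]

/-- if the multiplication map fails to be injective for some
finite-dimensional `V`, then it already fails to be injective in dimension `2`. -/
theorem stmt17 (k : Type*) [Field k] [IsAlgClosed k] (p e : ℕ) [CharP k p]
    (hp : p.Prime) (he : 1 ≤ e) (m : ℕ) (a : Fin (m + 1) → ℕ)
    (h : ∃ n : ℕ, ¬ Function.Injective (multMap k (p ^ e) n m a)) :
    ¬ Function.Injective (multMap k (p ^ e) 2 m a) := by
  classical
  obtain ⟨n, hn⟩ := h
  rw [mult_inj_iff] at hn ⊢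
  set q := p ^ e
  -- get witnesses
  rw [Function.not_injective_iff] at hn ⊢
  obtain ⟨d, d', hE, hne⟩ := hn
  -- find coordinates where they differ
  have : ∃ j i, d.1 j i ≠ d'.1 j i := by
    by_contra hc
    push_neg at hc
    exact hne (Subtype.ext (funext fun j => Finsupp.ext fun i => hc j i))
  obtain ⟨j0, i0, hji⟩ := this
  set f : Fin n → Fin 2 := fun x => if x = i0 then 0 else 1 with hf
  refine ⟨⟨fun j => Finsupp.mapDomain f (d.1 j), ?_⟩,
          ⟨fun j => Finsupp.mapDomain f (d'.1 j), ?_⟩, ?_, ?_⟩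
  · intro j
    rw [Finsupp.sum_mapDomain_index (fun _ => rfl) (fun _ _ _ => rfl)]
    exact d.2 j
  · intro j
    rw [Finsupp.sum_mapDomain_index (fun _ => rfl) (fun _ _ _ => rfl)]
    exact d'.2 j
  · -- equal exponent vectors
    have : ∀ (c : {d : Fin (m + 1) → (Fin n →₀ ℕ) // ∀ j, ((d j).sum fun _ e => e) = a j})
        (hc : ∀ j, ((Finsupp.mapDomain f (c.1 j)).sum fun _ e => e) = a j),
        Emap q 2 m a ⟨fun j => Finsupp.mapDomain f (c.1 j), hc⟩
          = Finsupp.mapDomain f (Emap q n m a c) := by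
      intro c hc
      simp only [Emap]
      rw [Finsupp.mapDomain_finset_sum]
      exact Finset.sum_congr rfl fun j _ => (Finsupp.mapDomain_smul _ _).symm
    rw [this d, this d', hE]
  · -- distinct
    intro hEq
    have := congrArg (fun c => c.1 j0 0) hEq
    simp only at this
    rw [mapDomain_collapse, mapDomain_collapse] at this
    exact hji this
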